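/- Let P(x,y) = ū_0 + c_1 φ_1 + c_2 φ_2 + c_3 φ_3 + c_4 φ_4 + c_5 φ_5 be a second-degree polynomial, where φ_1 = x−x_0, φ_2 = y−y_0, φ_3 = (x−x_0)²−Δx²/12, φ_4 = (y−y_0)²−Δy²/12, φ_5 = (x−x_0)(y−y_0). Then its Jiang–Shu oscillation indicator over the cell Ω_0 equals I[P] = A(c_1² + c_2²) + A[ Δx² c_3²/3 + Δy² c_4²/3 + (Δx²+Δy²)(4c_3² + 4c_4² + (13/12)c_5²) ], where A = ΔxΔy. -/

import Mathlib

open MeasureTheory intervalIntegral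

/-- Partial derivative with respect to the first variable. -/
noncomputable def dX (f : ℝ → ℝ → ℝ) : ℝ → ℝ → ℝ :=
  fun x y => deriv (fun x' => f x' y) x

/-- Partial derivative with respect to the second variable. -/
noncomputable def dY (f : ℝ → ℝ → ℝ) : ℝ → ℝ → ℝ :=
  fun x y => deriv (fun y' => f x y') y

/-- Double integral over the cell `Ω_0 = [x0−Δx/2, x0+Δx/2] × [y0−Δy/2, y0+Δy/2]`. -/
noncomputable def cellInt (x0 y0 dx dy : ℝ) (f : ℝ → ℝ → ℝ) : ℝ :=
  ∫ x in (x0 - dx / 2)..(x0 + dx / 2),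
    ∫ y in (y0 - dy / 2)..(y0 + dy / 2), f x y

open MeasureTheory intervalIntegral

/-- Integral of a quadratic over a symmetric interval about `c`. -/
lemma quad_int (c d p q r : ℝ) (f : ℝ → ℝ)
    (hf : ∀ y, f y = p + q * (y - c) + r * (y - c) ^ 2) :
    ∫ y in (c - d / 2)..(c + d / 2), f y = p * d + r * d ^ 3 / 12 := by
  have h1 : (∫ y in (c - d / 2)..(c + d / 2), f y)
      = ∫ y in (c - d / 2)..(c + d / 2), (fun s => p + q * s + r * s ^ 2) (y - c) :=
    intervalIntegral.integral_congr (fun y _ => hf y)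
  rw [h1, intervalIntegral.integral_comp_sub_right (fun s => p + q * s + r * s ^ 2) c]
  have hb1 : c - d / 2 - c = -(d / 2) := by ring
  have hb2 : c + d / 2 - c = d / 2 := by ring
  rw [hb1, hb2]
  have i1 : IntervalIntegrable (fun s : ℝ => p + q * s) volume (-(d/2)) (d/2) := by
    apply Continuous.intervalIntegrable; continuity
  have i2 : IntervalIntegrable (fun s : ℝ => r * s ^ 2) volume (-(d/2)) (d/2) := by
    apply Continuous.intervalIntegrable; continuity
  have i3 : IntervalIntegrable (fun s : ℝ => (p : ℝ)) volume (-(d/2)) (d/2) :=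
    intervalIntegrable_const
  have i4 : IntervalIntegrable (fun s : ℝ => q * s) volume (-(d/2)) (d/2) := by
    apply Continuous.intervalIntegrable; continuity
  rw [show (fun s : ℝ => p + q * s + r * s ^ 2) = fun s => (p + q * s) + r * s ^ 2 from rfl]
  rw [intervalIntegral.integral_add i1 i2, intervalIntegral.integral_add i3 i4,
    intervalIntegral.integral_const, intervalIntegral.integral_const_mul,
    intervalIntegral.integral_const_mul, integral_id, integral_pow]
  push_cast
  rw [smul_eq_mul]
  ring

lemma deriv_quad (a b e x0 : ℝ) :
    deriv (fun x : ℝ => a + b * (x - x0) + e * (x - x0) ^ 2) =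
      fun x => b + 2 * e * (x - x0) := by
  funext x
  have h1 : HasDerivAt (fun x : ℝ => x - x0) 1 x := (hasDerivAt_id x).sub_const x0
  have h : HasDerivAt (fun x : ℝ => a + b * (x - x0) + e * (x - x0) ^ 2)
      (b + 2 * e * (x - x0)) x := by
    have : HasDerivAt (fun x : ℝ => a + b * (x - x0) + e * (x - x0) ^ 2) _ x :=
      ((hasDerivAt_const x a).add (h1.const_mul b)).add ((h1.pow 2).const_mul e)
    convert this using 1
    push_cast; ring
  exact h.deriv
/-- the Jiang–Shu oscillation indicator of the second-degree
polynomial `P = ū_0 + c_1 φ_1 + ⋯ + c_5 φ_5` over the cell `Ω_0`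
(diameter `h = √(Δx²+Δy²)`, so `h² = Δx²+Δy²`) equals
`A(c_1²+c_2²) + A[Δx² c_3²/3 + Δy² c_4²/3 + (Δx²+Δy²)(4c_3²+4c_4²+(13/12)c_5²)]`
with `A = ΔxΔy`. -/
theorem jiang_shu_indicator_quadratic
    (x0 y0 dx dy u0 c1 c2 c3 c4 c5 : ℝ) (hdx : 0 < dx) (hdy : 0 < dy) :
    let P : ℝ → ℝ → ℝ := fun x y =>
      u0 + c1 * (x - x0) + c2 * (y - y0) + c3 * ((x - x0) ^ 2 - dx ^ 2 / 12) +
        c4 * ((y - y0) ^ 2 - dy ^ 2 / 12) + c5 * ((x - x0) * (y - y0))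
    let h : ℝ := Real.sqrt (dx ^ 2 + dy ^ 2)
    -- terms with |α| = 1 (factor h^0 = 1) and |α| = 2 (factor h²)
    (cellInt x0 y0 dx dy (fun x y => (dX P x y) ^ 2) +
        cellInt x0 y0 dx dy (fun x y => (dY P x y) ^ 2)) +
      h ^ 2 *
        (cellInt x0 y0 dx dy (fun x y => (dX (dX P) x y) ^ 2) +
          cellInt x0 y0 dx dy (fun x y => (dX (dY P) x y) ^ 2) +
          cellInt x0 y0 dx dy (fun x y => (dY (dY P) x y) ^ 2)) =
    dx * dy * (c1 ^ 2 + c2 ^ 2) +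
      dx * dy *
        (dx ^ 2 * c3 ^ 2 / 3 + dy ^ 2 * c4 ^ 2 / 3 +
          (dx ^ 2 + dy ^ 2) *
            (4 * c3 ^ 2 + 4 * c4 ^ 2 + 13 / 12 * c5 ^ 2)) := by
  intro P h
  -- h² = dx² + dy²
  have hh : h ^ 2 = dx ^ 2 + dy ^ 2 := by
    simp only [h]
    exact Real.sq_sqrt (by positivity)
  -- first partial derivatives
  have hX : dX P = fun x y => (c1 + c5 * (y - y0)) + 2 * c3 * (x - x0) := by
    funext x y
    simp only [dX, P]
    have hfe : (fun x' => u0 + c1 * (x' - x0) + c2 * (y - y0) +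
          c3 * ((x' - x0) ^ 2 - dx ^ 2 / 12) +
          c4 * ((y - y0) ^ 2 - dy ^ 2 / 12) + c5 * ((x' - x0) * (y - y0))) =
        fun x' => (u0 + c2 * (y - y0) - c3 * (dx ^ 2 / 12) +
          c4 * ((y - y0) ^ 2 - dy ^ 2 / 12)) +
          (c1 + c5 * (y - y0)) * (x' - x0) + c3 * (x' - x0) ^ 2 := by
      funext x'; ring
    rw [hfe, deriv_quad]
  have hY : dY P = fun x y => (c2 + c5 * (x - x0)) + 2 * c4 * (y - y0) := by
    funext x y
    simp only [dY, P]
    have hfe : (fun y' => u0 + c1 * (x - x0) + c2 * (y' - y0) +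
          c3 * ((x - x0) ^ 2 - dx ^ 2 / 12) +
          c4 * ((y' - y0) ^ 2 - dy ^ 2 / 12) + c5 * ((x - x0) * (y' - y0))) =
        fun y' => (u0 + c1 * (x - x0) + c3 * ((x - x0) ^ 2 - dx ^ 2 / 12) -
          c4 * (dy ^ 2 / 12)) + (c2 + c5 * (x - x0)) * (y' - y0) +
          c4 * (y' - y0) ^ 2 := by
      funext y'; ring
    rw [hfe, deriv_quad]
  -- second partial derivatives
  have hXX : dX (dX P) = fun _ _ => 2 * c3 := by
    funext x y
    rw [hX]; simp only [dX]
    have hfe : (fun x' => (c1 + c5 * (y - y0)) + 2 * c3 * (x' - x0)) =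
        fun x' => (c1 + c5 * (y - y0)) + 2 * c3 * (x' - x0) + 0 * (x' - x0) ^ 2 := by
      funext x'; ring
    rw [hfe, deriv_quad]; ring
  have hXY : dX (dY P) = fun _ _ => c5 := by
    funext x y
    rw [hY]; simp only [dX]
    have hfe : (fun x' => (c2 + c5 * (x' - x0)) + 2 * c4 * (y - y0)) =
        fun x' => (c2 + 2 * c4 * (y - y0)) + c5 * (x' - x0) + 0 * (x' - x0) ^ 2 := by
      funext x'; ring
    rw [hfe, deriv_quad]; ring
  have hYY : dY (dY P) = fun _ _ => 2 * c4 := by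
    funext x y
    rw [hY]; simp only [dY]
    have hfe : (fun y' => (c2 + c5 * (x - x0)) + 2 * c4 * (y' - y0)) =
        fun y' => (c2 + c5 * (x - x0)) + 2 * c4 * (y' - y0) + 0 * (y' - y0) ^ 2 := by
      funext y'; ring
    rw [hfe, deriv_quad]; ring
  simp only [hXX, hXY, hYY]
  simp only [hX, hY, hh]
  -- the five cell integrals
  have e1 : cellInt x0 y0 dx dy
      (fun x y => ((c1 + c5 * (y - y0)) + 2 * c3 * (x - x0)) ^ 2) =
      (c1 ^ 2 * dy + c5 ^ 2 * dy ^ 3 / 12) * dx + (4 * c3 ^ 2 * dy) * dx ^ 3 / 12 := by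
    rw [cellInt]
    rw [intervalIntegral.integral_congr (g := fun x =>
        ((c1 + 2 * c3 * (x - x0)) ^ 2 * dy + c5 ^ 2 * dy ^ 3 / 12))
      (fun x _ => quad_int y0 dy ((c1 + 2 * c3 * (x - x0)) ^ 2)
        (2 * (c1 + 2 * c3 * (x - x0)) * c5) (c5 ^ 2) _ (fun y => by ring))]
    exact quad_int x0 dx (c1 ^ 2 * dy + c5 ^ 2 * dy ^ 3 / 12) (4 * c1 * c3 * dy)
      (4 * c3 ^ 2 * dy) _ (fun x => by ring)
  have e2 : cellInt x0 y0 dx dy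
      (fun x y => ((c2 + c5 * (x - x0)) + 2 * c4 * (y - y0)) ^ 2) =
      (c2 ^ 2 * dy + 4 * c4 ^ 2 * dy ^ 3 / 12) * dx + (c5 ^ 2 * dy) * dx ^ 3 / 12 := by
    rw [cellInt]
    rw [intervalIntegral.integral_congr (g := fun x =>
        ((c2 + c5 * (x - x0)) ^ 2 * dy + 4 * c4 ^ 2 * dy ^ 3 / 12))
      (fun x _ => quad_int y0 dy ((c2 + c5 * (x - x0)) ^ 2)
        (2 * (c2 + c5 * (x - x0)) * (2 * c4)) (4 * c4 ^ 2) _ (fun y => by ring))]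
    exact quad_int x0 dx (c2 ^ 2 * dy + 4 * c4 ^ 2 * dy ^ 3 / 12) (2 * c2 * c5 * dy)
      (c5 ^ 2 * dy) _ (fun x => by ring)
  have econst : ∀ k : ℝ, cellInt x0 y0 dx dy (fun _ _ => k) = k * dy * dx := by
    intro k
    rw [cellInt]
    have inner : ∀ x : ℝ, (∫ y in (y0 - dy / 2)..(y0 + dy / 2), k) = k * dy := by
      intro x
      have := quad_int y0 dy k 0 0 (fun _ => k) (fun y => by ring)
      linarith
    rw [intervalIntegral.integral_congr (g := fun _ => k * dy) (fun x _ => inner x)]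
    have := quad_int x0 dx (k * dy) 0 0 (fun _ => k * dy) (fun x => by ring)
    linarith
  rw [e1, e2]
  rw [econst ((2 * c3) ^ 2), econst (c5 ^ 2), econst ((2 * c4) ^ 2)]
  ring
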